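/- Let g(x) = ‖x‖₁ on ℝ^n and ν > 0. Then for every x ∈ ℝ^n, the B-subdifferential ∂_B prox_{νg}(x) consists exactly of the diagonal matrices V ∈ ℝ^{n×n} whose (i,i)-th entry satisfies: V_{i,i} = 0 if |x_i| < ν; V_{i,i} = 1 if |x_i| > ν; and V_{i,i} ∈ {0, 1} if |x_i| = ν. -/

import Mathlib

open Filter Topology

/-- The B-subdifferential of a map `F : ℝ^n → ℝ^n` at `x`: the set of limits of
derivatives `∇F(x^(k))` along sequences `x^(k) → x` of differentiability points of `F`. -/
def Bsubdiff {n : ℕ} (F : EuclideanSpace ℝ (Fin n) → EuclideanSpace ℝ (Fin n))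
    (x : EuclideanSpace ℝ (Fin n)) :
    Set (EuclideanSpace ℝ (Fin n) →L[ℝ] EuclideanSpace ℝ (Fin n)) :=
  {V | ∃ u : ℕ → EuclideanSpace ℝ (Fin n),
      Filter.Tendsto u Filter.atTop (nhds x) ∧
      (∀ k, DifferentiableAt ℝ F (u k)) ∧
      Filter.Tendsto (fun k => fderiv ℝ F (u k)) Filter.atTop (nhds V)}

open Set
noncomputable def stv (ν t : ℝ) : ℝ := if ν < t then t - ν else if t < -ν then t + ν else 0

noncomputable def stmap (ν : ℝ) (n : ℕ) : EuclideanSpace ℝ (Fin n) → EuclideanSpace ℝ (Fin n) :=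
  fun y => WithLp.toLp 2 (fun i => stv ν (y i))

noncomputable def diagCLM {n : ℕ} (d : Fin n → ℝ) :
    EuclideanSpace ℝ (Fin n) →L[ℝ] EuclideanSpace ℝ (Fin n) :=
  LinearMap.toContinuousLinearMap
    { toFun := fun z => WithLp.toLp 2 (fun i => d i * z i)
      map_add' := by intro a b; ext i; simp [PiLp.add_apply, mul_add]
      map_smul' := by intro c a; ext i; simp [PiLp.smul_apply, smul_eq_mul, mul_left_comm] }

@[simp] lemma diagCLM_apply {n : ℕ} (d : Fin n → ℝ) (z : EuclideanSpace ℝ (Fin n)) (i : Fin n) :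
    diagCLM d z i = d i * z i := rfl

lemma stv_min {ν : ℝ} (hν : 0 < ν) (t z : ℝ) :
    ν * |stv ν t| + (stv ν t - t) ^ 2 / 2 ≤ ν * |z| + (z - t) ^ 2 / 2 := by
  unfold stv
  split_ifs with h1 h2
  · rw [abs_of_nonneg (by linarith)]
    rcases abs_cases z with ⟨hz, hz'⟩ | ⟨hz, hz'⟩ <;> rw [hz] <;>
      nlinarith [sq_nonneg (z - t + ν), sq_nonneg (z - t - ν)]
  · rw [abs_of_nonpos (by linarith)]
    rcases abs_cases z with ⟨hz, hz'⟩ | ⟨hz, hz'⟩ <;> rw [hz] <;>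
      nlinarith [sq_nonneg (z - t + ν), sq_nonneg (z - t - ν)]
  · rw [abs_zero]
    rcases abs_cases z with ⟨hz, hz'⟩ | ⟨hz, hz'⟩ <;> rw [hz] <;>
      nlinarith [sq_nonneg (z - t + ν), sq_nonneg (z - t - ν), sq_nonneg z]

lemma stv_unique {ν : ℝ} (hν : 0 < ν) (t s : ℝ)
    (h : ∀ z, ν * |s| + (s - t) ^ 2 / 2 ≤ ν * |z| + (z - t) ^ 2 / 2) : s = stv ν t := by
  by_contra hne
  have h2 := stv_min hν t s
  have h3 := h ((s + stv ν t) / 2)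
  have habs : |(s + stv ν t) / 2| ≤ (|s| + |stv ν t|) / 2 := by
    rw [abs_div, abs_two]; linarith [abs_add_le s (stv ν t)]
  have hne' : s - stv ν t ≠ 0 := sub_ne_zero.mpr hne
  have hsq : (s - stv ν t) ^ 2 > 0 := by positivity
  nlinarith

lemma norm_sq_eq' {n : ℕ} (w : EuclideanSpace ℝ (Fin n)) : ‖w‖ ^ 2 = ∑ i, (w i) ^ 2 := by
  rw [EuclideanSpace.norm_eq, Real.sq_sqrt (by positivity)]
  simp [sq_abs]

lemma fsep {n : ℕ} (ν : ℝ) (x z : EuclideanSpace ℝ (Fin n)) :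
    ν * (∑ i, |z i|) + ‖z - x‖ ^ 2 / 2 = ∑ i, (ν * |z i| + (z i - x i) ^ 2 / 2) := by
  rw [norm_sq_eq', Finset.mul_sum, Finset.sum_add_distrib, ← Finset.sum_div]
  simp [PiLp.sub_apply]

lemma prox_eq {n : ℕ} (ν : ℝ) (hν : 0 < ν)
    (prox : EuclideanSpace ℝ (Fin n) → EuclideanSpace ℝ (Fin n))
    (hprox : ∀ x, IsMinOn
      (fun z : EuclideanSpace ℝ (Fin n) => ν * (∑ i, |z i|) + ‖z - x‖ ^ 2 / 2)
      Set.univ (prox x))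
    (x : EuclideanSpace ℝ (Fin n)) (i : Fin n) : prox x i = stv ν (x i) := by
  apply stv_unique hν
  intro z
  set a := prox x with ha
  have key := isMinOn_iff.mp (hprox x) (WithLp.toLp 2 (Function.update a i z)) (Set.mem_univ _)
  rw [fsep, fsep] at key
  have hsplit : ∀ w : EuclideanSpace ℝ (Fin n),
      (∑ j, (ν * |w j| + (w j - x j) ^ 2 / 2)) =
      (∑ j ∈ Finset.univ.erase i, (ν * |w j| + (w j - x j) ^ 2 / 2))
        + (ν * |w i| + (w i - x i) ^ 2 / 2) := by
    intro w; rw [Finset.sum_erase_add]; exact Finset.mem_univ i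
  rw [hsplit a, hsplit (WithLp.toLp 2 (Function.update a i z))] at key
  simp only [PiLp.toLp_apply] at key
  have heq : (∑ j ∈ Finset.univ.erase i,
      (ν * |Function.update a i z j| + (Function.update a i z j - x j) ^ 2 / 2)) =
      ∑ j ∈ Finset.univ.erase i, (ν * |a j| + (a j - x j) ^ 2 / 2) := by
    apply Finset.sum_congr rfl
    intro j hj
    rw [Function.update_of_ne (Finset.ne_of_mem_erase hj)]
  rw [heq, Function.update_self] at key
  linarith

lemma hasFDerivAt_stmap {n : ℕ} {ν : ℝ} (hν : 0 < ν) (y : EuclideanSpace ℝ (Fin n))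
    (hy : ∀ i, |y i| ≠ ν) :
    HasFDerivAt (stmap ν n) (diagCLM (fun i => if ν < |y i| then (1:ℝ) else 0)) y := by
  set d : Fin n → ℝ := fun i => if ν < |y i| then (1:ℝ) else 0 with hd
  set c : EuclideanSpace ℝ (Fin n) :=
    WithLp.toLp 2 (fun i => if ν < y i then -ν else if y i < -ν then ν else 0) with hc
  have hA : HasFDerivAt (fun z => diagCLM d z + c) (diagCLM d) y :=
    (diagCLM d).hasFDerivAt.add_const c
  apply hA.congr_of_eventuallyEq
  have hev : ∀ i, ∀ᶠ z : EuclideanSpace ℝ (Fin n) in nhds y,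
      stv ν (z i) = d i * z i + c i := by
    intro i
    have hcont : Continuous fun z : EuclideanSpace ℝ (Fin n) => z i :=
      (EuclideanSpace.proj (𝕜 := ℝ) i).continuous
    rcases lt_trichotomy (|y i|) ν with h | h | h
    · have h1 : ∀ᶠ z : EuclideanSpace ℝ (Fin n) in nhds y, |z i| < ν :=
        hcont.abs.continuousAt.eventually_lt continuousAt_const h
      filter_upwards [h1] with z hz
      obtain ⟨ha, hb⟩ := abs_lt.mp hz
      obtain ⟨hya, hyb⟩ := abs_lt.mp h
      simp only [stv, hd, hc, PiLp.toLp_apply, if_neg (not_lt.mpr hb.le), if_neg (not_lt.mpr ha.le),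
        if_neg (not_lt.mpr h.le), if_neg (not_lt.mpr hyb.le), if_neg (not_lt.mpr hya.le)]
      ring
    · exact absurd h (hy i)
    · rcases lt_abs.mp h with hpos | hneg
      · have h1 : ∀ᶠ z : EuclideanSpace ℝ (Fin n) in nhds y, ν < z i :=
          continuousAt_const.eventually_lt hcont.continuousAt hpos
        filter_upwards [h1] with z hz
        simp only [stv, hd, hc, PiLp.toLp_apply, if_pos hz, if_pos h, if_pos hpos]
        ring
      · have hneg' : y i < -ν := by linarith
        have h1 : ∀ᶠ z : EuclideanSpace ℝ (Fin n) in nhds y, z i < -ν :=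
          hcont.continuousAt.eventually_lt continuousAt_const hneg'
        filter_upwards [h1] with z hz
        have h2 : ¬ ν < z i := by linarith
        have h3 : ¬ ν < y i := by linarith
        simp only [stv, hd, hc, PiLp.toLp_apply, if_neg h2, if_pos hz, if_pos h, if_neg h3, if_pos hneg']
        ring
  have := Filter.eventually_all.mpr hev
  filter_upwards [this] with z hz
  ext i
  simpa [stmap, PiLp.add_apply] using hz i

lemma not_diff_stmap {n : ℕ} {ν : ℝ} (hν : 0 < ν) (y : EuclideanSpace ℝ (Fin n))
    (i : Fin n) (hy : |y i| = ν) : ¬ DifferentiableAt ℝ (stmap ν n) y := by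
  intro hdiff
  set v : EuclideanSpace ℝ (Fin n) := EuclideanSpace.single i (1:ℝ) with hv
  set line : ℝ → EuclideanSpace ℝ (Fin n) := fun t => y + t • v with hline
  have hlined : DifferentiableAt ℝ line 0 := (differentiableAt_id.smul_const v).const_add y
  have hline0 : line 0 = y := by simp [hline]
  have hcompd : DifferentiableAt ℝ (fun t => stmap ν n (line t)) 0 :=
    (hline0 ▸ hdiff).comp 0 hlined
  have hgd : DifferentiableAt ℝ (fun t => stmap ν n (line t) i) 0 := by
    have := ((EuclideanSpace.proj (𝕜 := ℝ) i).differentiableAt).comp 0 hcompd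
    exact this
  have hg : ∀ t : ℝ, stmap ν n (line t) i = stv ν (y i + t) := by
    intro t
    simp [stmap, hline, PiLp.add_apply, PiLp.smul_apply, hv, EuclideanSpace.single_apply,
      smul_eq_mul]
  set g : ℝ → ℝ := fun t => stmap ν n (line t) i with hgdef
  have hg2 : ∀ t : ℝ, g t = stv ν (y i + t) := hg
  set c : ℝ := deriv g 0 with hcdef
  have hgc : HasDerivAt g c 0 := hgd.hasDerivAt
  rcases abs_eq hν.le |>.mp hy with hpos | hneg
  · have hid : ∀ t ∈ Ici (0:ℝ), t = g t := by
      intro t ht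
      rw [hg2, hpos, stv]
      rcases eq_or_lt_of_le (mem_Ici.mp ht) with h | h
      · rw [← h]; split_ifs <;> linarith
      · rw [if_pos (by linarith)]; ring
    have h1 : HasDerivWithinAt (fun t : ℝ => t) c (Ici 0) 0 :=
      (hgc.hasDerivWithinAt).congr hid (hid 0 self_mem_Ici)
    have h2 : HasDerivWithinAt (fun t : ℝ => t) 1 (Ici 0) 0 := (hasDerivAt_id 0).hasDerivWithinAt
    have hc1 : c = 1 := by
      have := (uniqueDiffOn_Ici (0:ℝ) 0 self_mem_Ici).eq h1.hasFDerivWithinAt h2.hasFDerivWithinAt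
      simpa using congrArg (fun L => L 1) this
    have hzero : ∀ t ∈ Icc (-ν) (0:ℝ), (0:ℝ) = g t := by
      intro t ht
      obtain ⟨hta, htb⟩ := ht
      rw [hg2, hpos, stv, if_neg (by linarith), if_neg (by linarith)]
    have h3 : HasDerivWithinAt (fun _ : ℝ => (0:ℝ)) c (Icc (-ν) 0) 0 :=
      (hgc.hasDerivWithinAt).congr hzero (hzero 0 ⟨by linarith, le_refl 0⟩)
    have h4 : HasDerivWithinAt (fun _ : ℝ => (0:ℝ)) 0 (Icc (-ν) 0) 0 :=
      (hasDerivAt_const 0 (0:ℝ)).hasDerivWithinAt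
    have hc0 : c = 0 := by
      have := (uniqueDiffOn_Icc (by linarith : -ν < 0) 0 ⟨by linarith, le_refl 0⟩).eq
        h3.hasFDerivWithinAt h4.hasFDerivWithinAt
      simpa using congrArg (fun L => L 1) this
    rw [hc1] at hc0; exact one_ne_zero hc0
  · have hid : ∀ t ∈ Iic (0:ℝ), t = g t := by
      intro t ht
      rw [hg2, hneg, stv]
      rcases eq_or_lt_of_le (mem_Iic.mp ht) with h | h
      · rw [h]; split_ifs <;> linarith
      · rw [if_neg (by linarith), if_pos (by linarith)]; ring
    have h1 : HasDerivWithinAt (fun t : ℝ => t) c (Iic 0) 0 :=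
      (hgc.hasDerivWithinAt).congr hid (hid 0 self_mem_Iic)
    have h2 : HasDerivWithinAt (fun t : ℝ => t) 1 (Iic 0) 0 := (hasDerivAt_id 0).hasDerivWithinAt
    have hc1 : c = 1 := by
      have := (uniqueDiffOn_Iic (0:ℝ) 0 self_mem_Iic).eq h1.hasFDerivWithinAt h2.hasFDerivWithinAt
      simpa using congrArg (fun L => L 1) this
    have hzero : ∀ t ∈ Icc (0:ℝ) ν, (0:ℝ) = g t := by
      intro t ht
      obtain ⟨hta, htb⟩ := ht
      rw [hg2, hneg, stv, if_neg (by linarith), if_neg (by linarith)]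
    have h3 : HasDerivWithinAt (fun _ : ℝ => (0:ℝ)) c (Icc 0 ν) 0 :=
      (hgc.hasDerivWithinAt).congr hzero (hzero 0 ⟨le_refl 0, hν.le⟩)
    have h4 : HasDerivWithinAt (fun _ : ℝ => (0:ℝ)) 0 (Icc 0 ν) 0 :=
      (hasDerivAt_const 0 (0:ℝ)).hasDerivWithinAt
    have hc0 : c = 0 := by
      have := (uniqueDiffOn_Icc hν 0 ⟨le_refl 0, hν.le⟩).eq
        h3.hasFDerivWithinAt h4.hasFDerivWithinAt
      simpa using congrArg (fun L => L 1) this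
    rw [hc1] at hc0; exact one_ne_zero hc0



open Filter Topology

/-- For `g = ‖·‖₁` and `ν > 0`, the B-subdifferential of the proximal
map `prox_{νg}` at `x` consists exactly of the diagonal matrices whose `(i,i)` entry is
`0` if `|x_i| < ν`, `1` if `|x_i| > ν`, and belongs to `{0, 1}` if `|x_i| = ν`. -/
theorem statement4 {n : ℕ} (ν : ℝ) (hν : 0 < ν)
    (prox : EuclideanSpace ℝ (Fin n) → EuclideanSpace ℝ (Fin n))
    (hprox : ∀ x, IsMinOn
      (fun z : EuclideanSpace ℝ (Fin n) => ν * (∑ i, |z i|) + ‖z - x‖ ^ 2 / 2)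
      Set.univ (prox x))
    (x : EuclideanSpace ℝ (Fin n)) :
    Bsubdiff prox x = {V | ∃ d : Fin n → ℝ,
      (∀ i, (|x i| < ν → d i = 0) ∧ (ν < |x i| → d i = 1) ∧ (|x i| = ν → d i = 0 ∨ d i = 1)) ∧
      ∀ z, ∀ i, V z i = d i * z i} := by
  have hP : prox = stmap ν n := by
    funext x'
    ext i
    exact prox_eq ν hν prox hprox x' i
  rw [hP]
  ext V
  constructor
  · rintro ⟨u, hu, hd, hconv⟩
    have hne : ∀ k i, |u k i| ≠ ν := fun k i h => not_diff_stmap hν (u k) i h (hd k)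
    set e : ℕ → Fin n → ℝ := fun k i => if ν < |u k i| then (1:ℝ) else 0 with he
    have hfd : ∀ k, fderiv ℝ (stmap ν n) (u k) = diagCLM (e k) :=
      fun k => (hasFDerivAt_stmap hν (u k) (hne k)).fderiv
    have hui : ∀ i, Tendsto (fun k => u k i) atTop (nhds (x i)) :=
      fun i => ((EuclideanSpace.proj (𝕜 := ℝ) i).continuous.tendsto x).comp hu
    -- entrywise convergence of the derivatives
    have happ : ∀ z : EuclideanSpace ℝ (Fin n), ∀ i,
        Tendsto (fun k => e k i * z i) atTop (nhds (V z i)) := by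
      intro z i
      have hc1 : Continuous fun T : EuclideanSpace ℝ (Fin n) →L[ℝ] EuclideanSpace ℝ (Fin n) =>
          T z := (ContinuousLinearMap.apply ℝ (EuclideanSpace ℝ (Fin n)) z).continuous
      have hc2 : Continuous fun T : EuclideanSpace ℝ (Fin n) →L[ℝ] EuclideanSpace ℝ (Fin n) =>
          T z i := (EuclideanSpace.proj (𝕜 := ℝ) i).continuous.comp hc1
      have := (hc2.tendsto V).comp hconv
      refine this.congr fun k => ?_
      simp [Function.comp, hfd k]
    refine ⟨fun i => V (EuclideanSpace.single i 1) i, fun i => ?_, fun z i => ?_⟩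
    · have hei : Tendsto (fun k => e k i) atTop (nhds (V (EuclideanSpace.single i 1) i)) := by
        have := happ (EuclideanSpace.single i 1) i
        simpa [EuclideanSpace.single_apply] using this
      refine ⟨fun h => ?_, fun h => ?_, fun h => ?_⟩
      · have hev : ∀ᶠ k in atTop, e k i = 0 := by
          filter_upwards [(hui i).abs.eventually_lt_const h] with k hk
          simp [he, if_neg (not_lt.mpr hk.le)]
        exact tendsto_nhds_unique hei (tendsto_const_nhds.congr' (hev.mono fun k hk => hk.symm))
      · have hev : ∀ᶠ k in atTop, e k i = 1 := by
          filter_upwards [(hui i).abs.eventually_const_lt h] with k hk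
          simp [he, if_pos hk]
        exact tendsto_nhds_unique hei (tendsto_const_nhds.congr' (hev.mono fun k hk => hk.symm))
      · have hcl : IsClosed ({0, 1} : Set ℝ) := (Set.toFinite _).isClosed
        have hmem : V (EuclideanSpace.single i 1) i ∈ ({0, 1} : Set ℝ) := by
          refine hcl.mem_of_tendsto hei (Filter.Eventually.of_forall fun k => ?_)
          by_cases hk : ν < |u k i| <;> simp [he, hk]
        simpa using hmem
    · have h1 : Tendsto (fun k => e k i * z i)
          atTop (nhds (V (EuclideanSpace.single i 1) i * z i)) := by
        have hei : Tendsto (fun k => e k i) atTop (nhds (V (EuclideanSpace.single i 1) i)) := by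
          have := happ (EuclideanSpace.single i 1) i
          simpa [EuclideanSpace.single_apply] using this
        exact hei.mul_const (z i)
      exact tendsto_nhds_unique (happ z i) h1
  · rintro ⟨d, hcond, hV⟩
    set c : EuclideanSpace ℝ (Fin n) :=
      WithLp.toLp 2 (fun i => if |x i| = ν then (if d i = 1 then x i / ν else -(x i / ν)) else 0) with hc
    set ε : ℕ → ℝ := fun k => min ν (1 / (k + 1 : ℝ)) with hε
    have hεpos : ∀ k, 0 < ε k := fun k => lt_min hν (by positivity)
    have hεle : ∀ k, ε k ≤ ν := fun k => min_le_left _ _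
    have hε0 : Tendsto ε atTop (nhds 0) := by
      apply squeeze_zero (fun k => (hεpos k).le) (fun k => min_le_right _ _)
      exact tendsto_one_div_add_atTop_nhds_zero_nat
    set u : ℕ → EuclideanSpace ℝ (Fin n) := fun k => x + ε k • c with hu
    have hulim : Tendsto u atTop (nhds x) := by
      have : Tendsto (fun k => x + ε k • c) atTop (nhds (x + (0:ℝ) • c)) :=
        tendsto_const_nhds.add (hε0.smul_const c)
      simpa using this
    have huk : ∀ k i, u k i = x i + ε k * c i := by
      intro k i
      simp [hu, PiLp.add_apply, PiLp.smul_apply, smul_eq_mul]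
    -- key pointwise facts
    have hkey : ∀ k i, |u k i| ≠ ν ∧ (if ν < |u k i| then (1:ℝ) else 0) = d i := by
      intro k i
      rcases lt_trichotomy (|x i|) ν with h | h | h
      · have hci : c i = 0 := by simp [hc, if_neg (ne_of_lt h)]
        have : u k i = x i := by rw [huk, hci]; ring
        rw [this]
        exact ⟨ne_of_lt h, by rw [if_neg (not_lt.mpr h.le), ((hcond i).1 h).symm]⟩
      · rcases abs_eq hν.le |>.mp h with hpos | hneg
        · by_cases hd1 : d i = 1
          · have hci : c i = 1 := by rw [hc]; simp [hpos, hd1, abs_of_nonneg hν.le, div_self hν.ne']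
            have hui : u k i = ν + ε k := by rw [huk, hci, hpos]; ring
            have habs : |u k i| = ν + ε k := by
              rw [hui, abs_of_nonneg (by linarith [hεpos k])]
            constructor
            · rw [habs]; linarith [hεpos k]
            · rw [habs, if_pos (by linarith [hεpos k]), hd1]
          · have hdi0 : d i = 0 := ((hcond i).2.2 h).resolve_right hd1
            have hci : c i = -1 := by
              rw [hc]; simp [hpos, hd1, abs_of_nonneg hν.le, div_self hν.ne']
            have hui : u k i = ν - ε k := by rw [huk, hci, hpos]; ring
            have habs : |u k i| = ν - ε k := by
              rw [hui, abs_of_nonneg (by linarith [hεle k])]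
            constructor
            · rw [habs]; linarith [hεpos k]
            · rw [habs, if_neg (by linarith [hεpos k] : ¬ ν < ν - ε k), hdi0]
        · by_cases hd1 : d i = 1
          · have hci : c i = -1 := by
              rw [hc]; simp [hneg, hd1, abs_of_nonneg hν.le, neg_div, div_self hν.ne']
            have hui : u k i = -(ν + ε k) := by rw [huk, hci, hneg]; ring
            have habs : |u k i| = ν + ε k := by
              rw [hui, abs_neg, abs_of_nonneg (by linarith [hεpos k])]
            constructor
            · rw [habs]; linarith [hεpos k]
            · rw [habs, if_pos (by linarith [hεpos k]), hd1]
          · have hdi0 : d i = 0 := ((hcond i).2.2 h).resolve_right hd1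
            have hci : c i = 1 := by
              rw [hc]; simp [hneg, hd1, abs_of_nonneg hν.le, neg_div, div_self hν.ne']
            have hui : u k i = -(ν - ε k) := by rw [huk, hci, hneg]; ring
            have habs : |u k i| = ν - ε k := by
              rw [hui, abs_neg, abs_of_nonneg (by linarith [hεle k])]
            constructor
            · rw [habs]; linarith [hεpos k]
            · rw [habs, if_neg (by linarith [hεpos k] : ¬ ν < ν - ε k), hdi0]
      · have hci : c i = 0 := by simp [hc, if_neg (ne_of_gt h)]
        have : u k i = x i := by rw [huk, hci]; ring
        rw [this]
        exact ⟨ne_of_gt h, by rw [if_pos h, ((hcond i).2.1 h).symm]⟩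
    have hVd : ∀ k, V = diagCLM (fun i => if ν < |u k i| then (1:ℝ) else 0) := by
      intro k
      apply ContinuousLinearMap.ext
      intro z
      ext i
      rw [diagCLM_apply, (hkey k i).2, hV z i]
    have hder : ∀ k, HasFDerivAt (stmap ν n) V (u k) := by
      intro k
      rw [hVd k]
      exact hasFDerivAt_stmap hν (u k) (fun i => (hkey k i).1)
    refine ⟨u, hulim, fun k => (hder k).differentiableAt, ?_⟩
    have : ∀ k, fderiv ℝ (stmap ν n) (u k) = V := fun k => (hder k).fderiv
    simp only [this]
    exact tendsto_const_nhds
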